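/- Let ψ, θ be C¹ functions on the closure of Ω, and let R, C > 0 with ‖θ‖₂ ≤ C·‖∇θ‖₂, |∂_yθ| ≤ R/√2 on Ω, and |∂_yψ| ≤ R/√2 on Ω. Then ∫_Ω |J(ψ,θ)·θ| ≤ (C·R/(2√2))·‖∇ψ‖₂² + (3·R·C/(2√2))·‖∇θ‖₂². -/

import Mathlib

open MeasureTheory Real Set Filter

noncomputable section

/-- The open unit square Ω = (0,1) × (0,1) in ℝ². -/
def Omg : Set (ℝ × ℝ) := Ioo (0:ℝ) 1 ×ˢ Ioo (0:ℝ) 1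

/-- Partial derivative in the x-direction. -/
def px (f : ℝ × ℝ → ℝ) (p : ℝ × ℝ) : ℝ := fderiv ℝ f p (1, 0)

/-- Partial derivative in the y-direction. -/
def py (f : ℝ × ℝ → ℝ) (p : ℝ × ℝ) : ℝ := fderiv ℝ f p (0, 1)

/-- Laplacian. -/
def lap (f : ℝ × ℝ → ℝ) (p : ℝ × ℝ) : ℝ := px (px f) p + py (py f) p

/-- Jacobian determinant J(ψ,θ) = ∂ₓψ·∂_yθ − ∂_yψ·∂ₓθ. -/
def Jac (ψ θ : ℝ × ℝ → ℝ) (p : ℝ × ℝ) : ℝ := px ψ p * py θ p - py ψ p * px θ p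

/-- The L^q norm over Ω: ‖f‖_q = (∫_Ω |f|^q)^(1/q). -/
def Lnorm (f : ℝ × ℝ → ℝ) (q : ℝ) : ℝ := (∫ p in Omg, |f p| ^ q) ^ (1 / q)

/-- ‖∇f‖₂ = (∫_Ω (|∂ₓf|² + |∂_yf|²))^(1/2). -/
def gradNorm (f : ℝ × ℝ → ℝ) : ℝ :=
  (∫ p in Omg, (|px f p| ^ 2 + |py f p| ^ 2)) ^ ((1:ℝ) / 2)

lemma omg_open : IsOpen Omg := isOpen_Ioo.prod isOpen_Ioo

lemma omg_meas : MeasurableSet Omg := omg_open.measurableSet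

lemma omg_closure : closure Omg = Icc (0:ℝ) 1 ×ˢ Icc (0:ℝ) 1 := by
  unfold Omg
  rw [closure_prod_eq, closure_Ioo zero_ne_one]

lemma omg_vol : volume Omg < ⊤ := by
  unfold Omg
  rw [show (volume : Measure (ℝ × ℝ)) = Measure.prod volume volume from rfl,
    Measure.prod_prod, Real.volume_Ioo]
  norm_num

/-- The partial derivatives of a C¹ function on the closed square are bounded on Ω. -/
lemma deriv_bound (f : ℝ × ℝ → ℝ) (hf : ContDiffOn ℝ 1 f (closure Omg)) :
    ∃ M : ℝ, ∀ p ∈ Omg, |px f p| ≤ M ∧ |py f p| ≤ M := by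
  have hcomp : IsCompact (closure Omg) := by
    rw [omg_closure]; exact isCompact_Icc.prod isCompact_Icc
  have hU : UniqueDiffOn ℝ (closure Omg) := by
    rw [omg_closure]; exact (uniqueDiffOn_Icc one_pos).prod (uniqueDiffOn_Icc one_pos)
  have hco : ContinuousOn (fun p => fderivWithin ℝ f (closure Omg) p) (closure Omg) :=
    hf.continuousOn_fderivWithin hU le_rfl
  obtain ⟨M, hM⟩ := hcomp.exists_bound_of_continuousOn hco
  refine ⟨M, fun p hp => ?_⟩
  have hnh : closure Omg ∈ nhds p := mem_of_superset (omg_open.mem_nhds hp) subset_closure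
  have heq : fderiv ℝ f p = fderivWithin ℝ f (closure Omg) p :=
    (fderivWithin_of_mem_nhds hnh).symm
  have hMp := hM p (subset_closure hp)
  have hkey : ∀ v : ℝ × ℝ, ‖v‖ = 1 → |fderiv ℝ f p v| ≤ M := by
    intro v hv
    calc |fderiv ℝ f p v| = ‖fderivWithin ℝ f (closure Omg) p v‖ := by
          rw [heq, Real.norm_eq_abs]
      _ ≤ ‖fderivWithin ℝ f (closure Omg) p‖ * ‖v‖ :=
          (fderivWithin ℝ f (closure Omg) p).le_opNorm v
      _ = ‖fderivWithin ℝ f (closure Omg) p‖ := by rw [hv, mul_one]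
      _ ≤ M := hMp
  constructor
  · exact hkey (1, 0) (by simp [Prod.norm_def])
  · exact hkey (0, 1) (by simp [Prod.norm_def])

lemma deriv_contOn (f : ℝ × ℝ → ℝ) (hf : ContDiffOn ℝ 1 f (closure Omg)) :
    ContinuousOn (px f) Omg ∧ ContinuousOn (py f) Omg := by
  have h := (hf.mono subset_closure).continuousOn_fderiv_of_isOpen omg_open le_rfl
  exact ⟨h.clm_apply continuousOn_const, h.clm_apply continuousOn_const⟩

lemma sq_integrableOn {f : ℝ × ℝ → ℝ} {M : ℝ} (hc : ContinuousOn f Omg)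
    (hb : ∀ p ∈ Omg, |f p| ≤ M) : IntegrableOn (fun p => (f p) ^ 2) Omg := by
  have hmeas : AEStronglyMeasurable (fun p => (f p) ^ 2) (volume.restrict Omg) :=
    (hc.pow 2).aestronglyMeasurable omg_meas
  refine Integrable.mono' (g := fun _ => M ^ 2)
    (integrableOn_const omg_vol.ne) hmeas ?_
  rw [ae_restrict_iff' omg_meas]
  refine ae_of_all _ fun p hp => ?_
  calc ‖(f p) ^ 2‖ = |f p| ^ 2 := by rw [Real.norm_eq_abs, abs_pow]
    _ ≤ M ^ 2 := pow_le_pow_left₀ (abs_nonneg _) (hb p hp) 2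

set_option maxHeartbeats 1000000 in
/-- Estimate of the nonlinear term used in the stability estimate. -/
theorem stmt_9 (ψ θ : ℝ × ℝ → ℝ) (R C : ℝ) (hR : 0 < R) (hC : 0 < C)
    (hψ : ContDiffOn ℝ 1 ψ (closure Omg)) (hθ : ContDiffOn ℝ 1 θ (closure Omg))
    (hP : Lnorm θ 2 ≤ C * gradNorm θ)
    (hbdθ : ∀ p ∈ Omg, |py θ p| ≤ R / Real.sqrt 2)
    (hbdψ : ∀ p ∈ Omg, |py ψ p| ≤ R / Real.sqrt 2) :
    (∫ p in Omg, |Jac ψ θ p * θ p|)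
      ≤ (C * R / (2 * Real.sqrt 2)) * gradNorm ψ ^ 2
        + (3 * R * C / (2 * Real.sqrt 2)) * gradNorm θ ^ 2 := by
  have hs2 : (0:ℝ) < Real.sqrt 2 := Real.sqrt_pos.2 (by norm_num)
  set K := R / Real.sqrt 2 with hKdef
  have hK : 0 < K := div_pos hR hs2
  -- bounds and continuity
  obtain ⟨Mψ, hMψ⟩ := deriv_bound ψ hψ
  obtain ⟨Mθ, hMθ⟩ := deriv_bound θ hθ
  obtain ⟨hcψx, hcψy⟩ := deriv_contOn ψ hψ
  obtain ⟨hcθx, hcθy⟩ := deriv_contOn θ hθ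
  have hcomp : IsCompact (closure Omg) := by
    rw [omg_closure]; exact isCompact_Icc.prod isCompact_Icc
  obtain ⟨Nθ, hNθ⟩ := hcomp.exists_bound_of_continuousOn hθ.continuousOn
  have hNθ' : ∀ p ∈ Omg, |θ p| ≤ Nθ := fun p hp => hNθ p (subset_closure hp)
  have hcθ : ContinuousOn θ Omg := hθ.continuousOn.mono subset_closure
  -- integrability of squares
  have Ia2 : IntegrableOn (fun p => (px ψ p) ^ 2) Omg :=
    sq_integrableOn hcψx (fun p hp => (hMψ p hp).1)
  have Ib2 : IntegrableOn (fun p => (py ψ p) ^ 2) Omg :=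
    sq_integrableOn hcψy (fun p hp => (hMψ p hp).2)
  have Ic2 : IntegrableOn (fun p => (px θ p) ^ 2) Omg :=
    sq_integrableOn hcθx (fun p hp => (hMθ p hp).1)
  have Id2 : IntegrableOn (fun p => (py θ p) ^ 2) Omg :=
    sq_integrableOn hcθy (fun p hp => (hMθ p hp).2)
  have It2 : IntegrableOn (fun p => (θ p) ^ 2) Omg := sq_integrableOn hcθ hNθ'
  -- abbreviations for the integrals
  set Ia := ∫ p in Omg, (px ψ p) ^ 2 with hIa
  set Ic := ∫ p in Omg, (px θ p) ^ 2 with hIc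
  set It := ∫ p in Omg, (θ p) ^ 2 with hIt
  set X2 := ∫ p in Omg, ((px ψ p) ^ 2 + (py ψ p) ^ 2) with hX2
  set Y2 := ∫ p in Omg, ((px θ p) ^ 2 + (py θ p) ^ 2) with hY2
  have hX2nn : 0 ≤ X2 := integral_nonneg fun p => by positivity
  have hY2nn : 0 ≤ Y2 := integral_nonneg fun p => by positivity
  have hItnn : 0 ≤ It := integral_nonneg fun p => by positivity
  -- gradNorm and Lnorm as square roots
  have hgψ : gradNorm ψ = Real.sqrt X2 := by
    rw [gradNorm, Real.sqrt_eq_rpow, hX2]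
    norm_num [sq_abs]
  have hgθ : gradNorm θ = Real.sqrt Y2 := by
    rw [gradNorm, Real.sqrt_eq_rpow, hY2]
    norm_num [sq_abs]
  have hLθ : Lnorm θ 2 = Real.sqrt It := by
    rw [Lnorm, Real.sqrt_eq_rpow, hIt]
    norm_num [Real.rpow_two, sq_abs]
  have hgψ2 : gradNorm ψ ^ 2 = X2 := by rw [hgψ, Real.sq_sqrt hX2nn]
  have hgθ2 : gradNorm θ ^ 2 = Y2 := by rw [hgθ, Real.sq_sqrt hY2nn]
  -- It ≤ C² Y2 from Poincaré hypothesis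
  have hIt_le : It ≤ C ^ 2 * Y2 := by
    have h1 : (Lnorm θ 2) ^ 2 ≤ (C * gradNorm θ) ^ 2 := by
      apply pow_le_pow_left₀ _ hP 2
      rw [hLθ]; exact Real.sqrt_nonneg _
    rw [hLθ, Real.sq_sqrt hItnn, mul_pow, hgθ2] at h1
    exact h1
  -- Ia ≤ X2 and Ic ≤ Y2
  have hIa_le : Ia ≤ X2 :=
    integral_mono Ia2 (Ia2.add Ib2) fun p => le_add_of_nonneg_right (sq_nonneg _)
  have hIc_le : Ic ≤ Y2 :=
    integral_mono Ic2 (Ic2.add Id2) fun p => le_add_of_nonneg_right (sq_nonneg _)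
  -- Young's inequality
  have young : ∀ A T : ℝ, 0 ≤ A → 0 ≤ T → A * T ≤ (C/2) * A ^ 2 + (1/(2*C)) * T ^ 2 := by
    intro A T hA hT
    have h2C : (0:ℝ) < 2 * C := by positivity
    rw [← mul_le_mul_iff_right₀ h2C]
    have he : 2 * C * ((C/2) * A ^ 2 + (1/(2*C)) * T ^ 2) = C ^ 2 * A ^ 2 + T ^ 2 := by
      field_simp
    rw [he]
    nlinarith [sq_nonneg (C * A - T)]
  -- pointwise estimate
  have key : ∀ p ∈ Omg, |Jac ψ θ p * θ p|
      ≤ K * ((C/2) * (px ψ p) ^ 2 + (C/2) * (px θ p) ^ 2 + (1/C) * (θ p) ^ 2) := by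
    intro p hp
    have hd := hbdθ p hp
    have hb := hbdψ p hp
    have h0 : |Jac ψ θ p| ≤ |px ψ p| * |py θ p| + |py ψ p| * |px θ p| := by
      rw [Jac]
      calc |px ψ p * py θ p - py ψ p * px θ p|
          ≤ |px ψ p * py θ p| + |py ψ p * px θ p| := abs_sub _ _
        _ = |px ψ p| * |py θ p| + |py ψ p| * |px θ p| := by rw [abs_mul, abs_mul]
    have h1 : |Jac ψ θ p * θ p|
        ≤ (|px ψ p| * |py θ p| + |py ψ p| * |px θ p|) * |θ p| := by
      rw [abs_mul]
      exact mul_le_mul_of_nonneg_right h0 (abs_nonneg _)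
    have h2 : (|px ψ p| * |py θ p| + |py ψ p| * |px θ p|) * |θ p|
        ≤ K * (|px ψ p| * |θ p|) + K * (|px θ p| * |θ p|) := by
      have hAT : 0 ≤ |px ψ p| * |θ p| := mul_nonneg (abs_nonneg _) (abs_nonneg _)
      have hCT : 0 ≤ |px θ p| * |θ p| := mul_nonneg (abs_nonneg _) (abs_nonneg _)
      nlinarith [mul_nonneg hAT (sub_nonneg.2 hd), mul_nonneg hCT (sub_nonneg.2 hb)]
    have h3 : |px ψ p| * |θ p| ≤ (C/2) * |px ψ p| ^ 2 + (1/(2*C)) * |θ p| ^ 2 :=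
      young _ _ (abs_nonneg _) (abs_nonneg _)
    have h4 : |px θ p| * |θ p| ≤ (C/2) * |px θ p| ^ 2 + (1/(2*C)) * |θ p| ^ 2 :=
      young _ _ (abs_nonneg _) (abs_nonneg _)
    calc |Jac ψ θ p * θ p|
        ≤ K * (|px ψ p| * |θ p|) + K * (|px θ p| * |θ p|) := h1.trans h2
      _ ≤ K * ((C/2) * |px ψ p| ^ 2 + (1/(2*C)) * |θ p| ^ 2)
          + K * ((C/2) * |px θ p| ^ 2 + (1/(2*C)) * |θ p| ^ 2) := by
          gcongr
      _ = K * ((C/2) * (px ψ p) ^ 2 + (C/2) * (px θ p) ^ 2 + (1/C) * (θ p) ^ 2) := by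
          rw [sq_abs, sq_abs, sq_abs]
          field_simp
          ring
  -- integrability of the majorant
  have Imaj : IntegrableOn
      (fun p => K * ((C/2) * (px ψ p) ^ 2 + (C/2) * (px θ p) ^ 2 + (1/C) * (θ p) ^ 2))
      Omg :=
    (((Ia2.const_mul (C/2)).add (Ic2.const_mul (C/2))).add (It2.const_mul (1/C))).const_mul K
  -- integral comparison
  have hint : (∫ p in Omg, |Jac ψ θ p * θ p|)
      ≤ ∫ p in Omg, K * ((C/2) * (px ψ p) ^ 2 + (C/2) * (px θ p) ^ 2 + (1/C) * (θ p) ^ 2) := by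
    refine integral_mono_of_nonneg (ae_of_all _ fun p => abs_nonneg _) Imaj ?_
    rw [EventuallyLE, ae_restrict_iff' omg_meas]
    exact ae_of_all _ key
  -- compute the right-hand integral
  have hsplit : (∫ p in Omg, K * ((C/2) * (px ψ p) ^ 2 + (C/2) * (px θ p) ^ 2 + (1/C) * (θ p) ^ 2))
      = K * ((C/2) * Ia + (C/2) * Ic + (1/C) * It) := by
    rw [integral_const_mul]
    congr 1
    have h12 : IntegrableOn (fun p => (C/2) * (px ψ p) ^ 2 + (C/2) * (px θ p) ^ 2) Omg :=
      (Ia2.const_mul (C/2)).add (Ic2.const_mul (C/2))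
    have h3 : IntegrableOn (fun p => (1/C) * (θ p) ^ 2) Omg := It2.const_mul (1/C)
    have h1' : IntegrableOn (fun p => (C/2) * (px ψ p) ^ 2) Omg := Ia2.const_mul (C/2)
    have h2' : IntegrableOn (fun p => (C/2) * (px θ p) ^ 2) Omg := Ic2.const_mul (C/2)
    rw [integral_add h12 h3, integral_add h1' h2',
      integral_const_mul, integral_const_mul, integral_const_mul]
  -- final arithmetic
  have hfinal : (∫ p in Omg, |Jac ψ θ p * θ p|)
      ≤ K * ((C/2) * Ia + (C/2) * Ic + (1/C) * It) := by rw [← hsplit]; exact hint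
  rw [hgψ2, hgθ2]
  clear_value Ia Ic It X2 Y2 K
  calc (∫ p in Omg, |Jac ψ θ p * θ p|)
      ≤ K * ((C/2) * Ia + (C/2) * Ic + (1/C) * It) := hfinal
    _ ≤ K * ((C/2) * X2 + (C/2) * Y2 + (1/C) * (C ^ 2 * Y2)) := by gcongr
    _ = (C * R / (2 * Real.sqrt 2)) * X2 + (3 * R * C / (2 * Real.sqrt 2)) * Y2 := by
        rw [hKdef]
        field_simp
        ring
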